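/- arXiv:2207.08306 — 2 statements merged into one kernel-verified Lean document; each statement's English description precedes it below -/
import Mathlib

section
/- For any M, s > 0, any depth L and width vector p: every ReLU network in F_M(L,p,s) (at most s nonzero weights, all weights in [−M,M]) is equal, as a function on [0,1]^d, to a modified ReLU network in G₁(L,p,s(M+1)), i.e. F_M(L,p,s) ⊂ G₁(L,p,s(M+1)). -/
open MeasureTheory ProbabilityTheory Finset
open scoped BigOperators Classical Pointwise

noncomputable section

/-- The ReLU activation function. -/
def relu (x : ℝ) : ℝ := max 0 x

/-- The modifier function `α` from the paper. -/
def alphaFn (x : ℝ) : ℝ := if x < -1 then x + 1 else if x ≤ 1 then 0 else x - 1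

/-- The unit cube `[0,1]^d`. -/
def cube (d : ℕ) : Set (Fin d → ℝ) := Set.Icc 0 1

/-- Collections of weight matrices for a network with width function `p`. -/
abbrev NetWeights (p : ℕ → ℕ) : Type :=
  (i : ℕ) → Matrix (Fin (p (i + 1))) (Fin (p i)) ℝ

/-- Hidden layer computations of a feedforward ReLU network. -/
def hiddenLayers (p : ℕ → ℕ) (W : NetWeights p) (x : Fin (p 0) → ℝ) :
    (k : ℕ) → Fin (p k) → ℝ
  | 0 => x
  | k + 1 => fun j => relu ((W k).mulVec (hiddenLayers p W x k) j)

/-- An ordinary feedforward ReLU network of depth `L` (real-valued output;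
the output width `p (L+1)` is assumed to be `1`, and the output is read off
by summing the coordinates of the last layer). -/
def reluNet (L : ℕ) (p : ℕ → ℕ) (W : NetWeights p) (x : Fin (p 0) → ℝ) : ℝ :=
  ∑ j, (W L).mulVec (hiddenLayers p W x L) j

/-- Apply the modifier `α` entrywise to the hidden weight matrices. -/
def modifyWeights (L : ℕ) (p : ℕ → ℕ) (V : NetWeights p) : NetWeights p :=
  fun i => if i < L then (V i).map alphaFn else V i

/-- A modified ReLU network. -/
def modNet (L : ℕ) (p : ℕ → ℕ) (V : NetWeights p) (x : Fin (p 0) → ℝ) : ℝ :=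
  reluNet L p (modifyWeights L p V) x

/-- `l₁` norm of a matrix: sum of absolute values of all entries. -/
def matL1 {m k : ℕ} (W : Matrix (Fin m) (Fin k) ℝ) : ℝ := ∑ i, ∑ j, |W i j|

/-- Squared Frobenius norm of a matrix. -/
def matL2sq {m k : ℕ} (W : Matrix (Fin m) (Fin k) ℝ) : ℝ := ∑ i, ∑ j, (W i j) ^ 2

/-- Number of nonzero entries of a matrix. -/
def matNNZ {m k : ℕ} (W : Matrix (Fin m) (Fin k) ℝ) : ℕ :=
  (Finset.univ.filter fun ij : Fin m × Fin k => W ij.1 ij.2 ≠ 0).card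

def weightsL1 (L : ℕ) (p : ℕ → ℕ) (W : NetWeights p) : ℝ :=
  ∑ i ∈ Finset.range (L + 1), matL1 (W i)

def weightsL2sq (L : ℕ) (p : ℕ → ℕ) (W : NetWeights p) : ℝ :=
  ∑ i ∈ Finset.range (L + 1), matL2sq (W i)

def weightsNNZ (L : ℕ) (p : ℕ → ℕ) (W : NetWeights p) : ℕ :=
  ∑ i ∈ Finset.range (L + 1), matNNZ (W i)

def weightsBounded (L : ℕ) (p : ℕ → ℕ) (M : ℝ) (W : NetWeights p) : Prop :=
  ∀ i ≤ L, ∀ j k, |W i j k| ≤ M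

/-- `|p|_∞ = max {p_0, ..., p_L}`. -/
def pMax (L : ℕ) (p : ℕ → ℕ) : ℕ := (Finset.range (L + 1)).sup p

/-- The class `F_M(L,p,s)`: ReLU networks with at most `s` nonzero weights,
all contained in `[-M, M]`, viewed as functions on `[0,1]^d`. -/
def sparseReluClass (L : ℕ) (p : ℕ → ℕ) (M s : ℝ) : Set ((Fin (p 0) → ℝ) → ℝ) :=
  {f | ∃ W : NetWeights p, (∀ x ∈ cube (p 0), f x = reluNet L p W x) ∧
        (weightsNNZ L p W : ℝ) ≤ s ∧ weightsBounded L p M W}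

/-- The class `F̃(L,p,r)`: ReLU networks with total `l₁` weight norm at most `r`. -/
def l1ReluClass (L : ℕ) (p : ℕ → ℕ) (r : ℝ) : Set ((Fin (p 0) → ℝ) → ℝ) :=
  {f | ∃ W : NetWeights p, (∀ x ∈ cube (p 0), f x = reluNet L p W x) ∧ weightsL1 L p W ≤ r}

/-- The class `G₁(L,p,r)`: modified ReLU networks with total `l₁` weight norm at most `r`. -/
def modClassL1 (L : ℕ) (p : ℕ → ℕ) (r : ℝ) : Set ((Fin (p 0) → ℝ) → ℝ) :=
  {g | ∃ V : NetWeights p, (∀ x ∈ cube (p 0), g x = modNet L p V x) ∧ weightsL1 L p V ≤ r}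

/-- The class `G₂(L,p,r)`: modified ReLU networks with total squared `l₂` weight norm at most `r`. -/
def modClassL2 (L : ℕ) (p : ℕ → ℕ) (r : ℝ) : Set ((Fin (p 0) → ℝ) → ℝ) :=
  {g | ∃ V : NetWeights p, (∀ x ∈ cube (p 0), g x = modNet L p V x) ∧ weightsL2sq L p V ≤ r}

/-- Partial derivative in coordinate direction `i`. -/
def pderivAlong {d : ℕ} (i : Fin d) (f : (Fin d → ℝ) → ℝ) : (Fin d → ℝ) → ℝ :=
  fun x => fderiv ℝ f x (Pi.single i 1)

/-- Multi-index partial derivative `∂^γ`. -/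
def multiPderiv {d : ℕ} (γ : Fin d → ℕ) (f : (Fin d → ℝ) → ℝ) : (Fin d → ℝ) → ℝ :=
  (List.finRange d).foldr (fun i h => (pderivAlong i)^[γ i] h) f

/-- Degree `|γ|` of a multi-index. -/
def degree {d : ℕ} (γ : Fin d → ℕ) : ℕ := ∑ i, γ i

/-- `|x - y|_∞`. -/
def supDist {d : ℕ} (x y : Fin d → ℝ) : ℝ := ⨆ i, |x i - y i|

/-- The Hölder ball `C^β_d(F)`. -/
def holderBall (d : ℕ) (β F : ℝ) : Set ((Fin d → ℝ) → ℝ) :=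
  {g | ContDiff ℝ (⌊β⌋₊ : ℕ∞) g ∧
    ∃ b h : (Fin d → ℕ) → ℝ,
      (∀ γ : Fin d → ℕ, (degree γ : ℝ) < β → ∀ x ∈ cube d, |multiPderiv γ g x| ≤ b γ) ∧
      (∀ γ : Fin d → ℕ, degree γ = ⌊β⌋₊ → ∀ x ∈ cube d, ∀ y ∈ cube d, x ≠ y →
        |multiPderiv γ g x - multiPderiv γ g y| ≤ h γ * supDist x y ^ (β - (⌊β⌋₊ : ℝ))) ∧
      (∑ᶠ (γ : Fin d → ℕ) (_ : (degree γ : ℝ) < β), b γ) +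
        (∑ᶠ (γ : Fin d → ℕ) (_ : degree γ = ⌊β⌋₊), h γ) ≤ F}

/-- `isCoverOfSize δ F N` : there is a `δ`-cover (in sup distance on `[0,1]^d`)
of the function class `F` of cardinality `N`. -/
def isCoverOfSize {d : ℕ} (δ : ℝ) (F : Set ((Fin d → ℝ) → ℝ)) (N : ℕ) : Prop :=
  ∃ fs : Fin N → (Fin d → ℝ) → ℝ, ∀ f ∈ F, ∃ k, ∀ x ∈ cube d, |f x - fs k x| ≤ δ

/-- `⌈log₂ x⌉` as a natural number. -/
def ceilLog2 (x : ℝ) : ℕ := (⌈Real.logb 2 x⌉).toNat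

/-- The width vector `(d, w, ..., w, 1)` of a network of depth `L`. -/
def widthVec (d w L : ℕ) : ℕ → ℕ
  | 0 => d
  | i + 1 => if i + 1 ≤ L then w else 1

/-- The depth `L_n = 8 + (⌈log₂ n⌉ + 5)(1 + ⌈log₂ (d ∨ β)⌉)`. -/
def Ln (d : ℕ) (β : ℝ) (n : ℕ) : ℕ :=
  8 + (Nat.clog 2 n + 5) * (1 + ceilLog2 (max (d : ℝ) β))

/-- `N_n = ⌈n^{d/(2β+d)}⌉`. -/
def Nn (d : ℕ) (β : ℝ) (n : ℕ) : ℕ := ⌈(n : ℝ) ^ ((d : ℝ) / (2 * β + d))⌉₊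

/-- The hidden width `6(d + ⌈β⌉) N_n`. -/
def wn (d : ℕ) (β : ℝ) (n : ℕ) : ℕ := 6 * (d + ⌈β⌉₊) * Nn d β n

/-- The width vector `p_n = (d, 6(d+⌈β⌉)⌈n^{d/(2β+d)}⌉, ..., 6(d+⌈β⌉)⌈n^{d/(2β+d)}⌉, 1)`. -/
def pn (d : ℕ) (β : ℝ) (n : ℕ) : ℕ → ℕ := widthVec d (wn d β n) (Ln d β n)

end

-- Shift nonzero reals outward by 1; `alphaFn` inverts this.
noncomputable def shiftFn (x : ℝ) : ℝ := if 0 < x then x + 1 else if x < 0 then x - 1 else 0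

lemma alpha_shift (w : ℝ) : alphaFn (shiftFn w) = w := by
  unfold alphaFn shiftFn
  rcases lt_trichotomy w 0 with h | h | h <;> split_ifs <;> linarith

lemma abs_shift (w : ℝ) : |shiftFn w| = if w = 0 then 0 else |w| + 1 := by
  unfold shiftFn
  rcases lt_trichotomy w 0 with h | h | h
  · rw [if_neg (not_lt.mpr h.le), if_pos h, if_neg h.ne, abs_of_neg h,
      abs_of_neg (by linarith : w - 1 < 0)]
    ring
  · simp [h]
  · rw [if_pos h, if_neg h.ne', abs_of_pos h, abs_of_pos (by linarith : (0:ℝ) < w + 1)]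

/-- `F_M(L,p,s) ⊆ G₁(L,p,s(M+1))`. -/
theorem sparse_subset_modL1 (L : ℕ) (p : ℕ → ℕ) (hp : p (L + 1) = 1)
    (M s : ℝ) (hM : 0 < M) (hs : 0 < s) :
    sparseReluClass L p M s ⊆ modClassL1 L p (s * (M + 1)) := by
  rintro f ⟨W, hfW, hNNZ, hbd⟩
  classical
  set V : NetWeights p := fun i => if i < L then (W i).map shiftFn else W i with hV
  have hmod : modifyWeights L p V = W := by
    funext i
    by_cases h : i < L
    · simp only [modifyWeights, hV, if_pos h]
      funext j k
      simp [Matrix.map_apply, alpha_shift]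
    · simp [modifyWeights, hV, h]
  refine ⟨V, ?_, ?_⟩
  · intro x hx
    rw [modNet, hmod]; exact hfW x hx
  · have key : ∀ i ≤ L, matL1 (V i) ≤ (M + 1) * (matNNZ (W i) : ℝ) := by
      intro i hiL
      have hcast : ((matNNZ (W i) : ℝ)) =
          ∑ j, ∑ k, (if W i j k ≠ 0 then (1:ℝ) else 0) := by
        unfold matNNZ
        rw [Finset.card_filter]
        push_cast
        rw [Fintype.sum_prod_type]
      rw [hcast, Finset.mul_sum]
      unfold matL1
      refine Finset.sum_le_sum fun j _ => ?_
      rw [Finset.mul_sum]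
      refine Finset.sum_le_sum fun k _ => ?_
      have hb : |W i j k| ≤ M := hbd i hiL j k
      by_cases h : i < L
      · simp only [hV, if_pos h, Matrix.map_apply, abs_shift]
        by_cases hw : W i j k = 0 <;> simp [hw] <;> linarith
      · simp only [hV, if_neg h]
        by_cases hw : W i j k = 0 <;> simp [hw] <;> linarith [abs_nonneg (W i j k)]
    have h1 : weightsL1 L p V ≤ (M + 1) * (weightsNNZ L p W : ℝ) := by
      unfold weightsL1 weightsNNZ
      push_cast
      rw [Finset.mul_sum]
      exact Finset.sum_le_sum fun i hi => key i (Nat.lt_succ_iff.mp (Finset.mem_range.mp hi))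
    calc weightsL1 L p V ≤ (M + 1) * (weightsNNZ L p W : ℝ) := h1
      _ ≤ (M + 1) * s := by nlinarith
      _ = s * (M + 1) := by ring
end

section
/- For any M, s > 0, any depth L and width vector p: every modified ReLU network in G₁(L,p,s(M+1)) is equal, as a function on [0,1]^d, to an ordinary ReLU network in F_{s(M+1)}(L,p, s(M+1)+|p|_∞), i.e. G₁(L,p,s(M+1)) ⊂ F_{s(M+1)}(L,p, s(M+1)+|p|_∞), where |p|_∞ = max{p₀,...,p_L}. -/
open MeasureTheory ProbabilityTheory Finset
open scoped BigOperators Classical Pointwise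

lemma abs_alphaFn_le (x : ℝ) : |alphaFn x| ≤ |x| := by
  unfold alphaFn
  split_ifs with h1 h2
  · rw [abs_of_nonpos (by linarith), abs_of_nonpos (by linarith)]; linarith
  · simp [abs_nonneg]
  · rw [abs_of_nonneg (by linarith), abs_of_nonneg (by linarith)]; linarith

lemma one_le_of_alphaFn_ne (x : ℝ) (h : alphaFn x ≠ 0) : 1 ≤ |x| := by
  by_contra hc
  push_neg at hc
  have h1 : -1 ≤ x := by have := neg_abs_le x; linarith
  have h2 : x ≤ 1 := by have := le_abs_self x; linarith
  apply h
  unfold alphaFn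
  rw [if_neg (by linarith), if_pos h2]

lemma matL1_nonneg {m k : ℕ} (W : Matrix (Fin m) (Fin k) ℝ) : 0 ≤ matL1 W := by
  unfold matL1
  positivity

lemma entry_le_matL1 {m k : ℕ} (W : Matrix (Fin m) (Fin k) ℝ) (i : Fin m) (j : Fin k) :
    |W i j| ≤ matL1 W := by
  unfold matL1
  calc |W i j| ≤ ∑ j', |W i j'| :=
        Finset.single_le_sum (f := fun j' => |W i j'|)
          (fun _ _ => abs_nonneg _) (Finset.mem_univ j)
    _ ≤ ∑ i', ∑ j', |W i' j'| :=
        Finset.single_le_sum (f := fun i' => ∑ j', |W i' j'|)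
          (fun _ _ => Finset.sum_nonneg fun _ _ => abs_nonneg _) (Finset.mem_univ i)

lemma nnz_map_alpha_le {m k : ℕ} (V : Matrix (Fin m) (Fin k) ℝ) :
    (matNNZ (V.map alphaFn) : ℝ) ≤ matL1 V := by
  unfold matNNZ matL1
  rw [Finset.card_eq_sum_ones]
  push_cast
  calc (∑ _ij ∈ Finset.univ.filter
          (fun ij : Fin m × Fin k => (V.map alphaFn) ij.1 ij.2 ≠ 0), (1 : ℝ))
      ≤ ∑ ij ∈ Finset.univ.filter
          (fun ij : Fin m × Fin k => (V.map alphaFn) ij.1 ij.2 ≠ 0), |V ij.1 ij.2| := by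
        apply Finset.sum_le_sum
        intro ij hij
        exact one_le_of_alphaFn_ne _ (by simpa [Matrix.map] using (Finset.mem_filter.mp hij).2)
    _ ≤ ∑ ij : Fin m × Fin k, |V ij.1 ij.2| :=
        Finset.sum_le_sum_of_subset_of_nonneg (Finset.filter_subset _ _)
          (fun _ _ _ => abs_nonneg _)
    _ = ∑ i, ∑ j, |V i j| := by rw [Fintype.sum_prod_type]

/-- `G₁(L,p,s(M+1)) ⊆ F_{s(M+1)}(L,p,s(M+1)+|p|_∞)`. -/
theorem modL1_subset_sparse (L : ℕ) (p : ℕ → ℕ) (hp : p (L + 1) = 1)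
    (M s : ℝ) (hM : 0 < M) (hs : 0 < s) :
    modClassL1 L p (s * (M + 1))
      ⊆ sparseReluClass L p (s * (M + 1)) (s * (M + 1) + (pMax L p : ℝ)) := by
  intro g hg
  obtain ⟨V, hgV, hV⟩ := hg
  have hterm : ∀ i ∈ Finset.range (L + 1), matL1 (V i) ≤ s * (M + 1) := by
    intro i hi
    calc matL1 (V i) ≤ weightsL1 L p V :=
          Finset.single_le_sum (fun j _ => matL1_nonneg (V j)) hi
      _ ≤ s * (M + 1) := hV
  refine ⟨modifyWeights L p V, fun x hx => hgV x hx, ?_, ?_⟩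
  · -- sparsity bound
    unfold weightsNNZ
    rw [Finset.sum_range_succ]
    push_cast
    have h1 : (∑ i ∈ Finset.range L, (matNNZ (modifyWeights L p V i) : ℝ)) ≤ s * (M + 1) := by
      calc (∑ i ∈ Finset.range L, (matNNZ (modifyWeights L p V i) : ℝ))
          ≤ ∑ i ∈ Finset.range L, matL1 (V i) := by
            apply Finset.sum_le_sum
            intro i hi
            have hiL : i < L := Finset.mem_range.mp hi
            simp only [modifyWeights, if_pos hiL]
            exact nnz_map_alpha_le (V i)
        _ ≤ weightsL1 L p V := by
            unfold weightsL1
            apply Finset.sum_le_sum_of_subset_of_nonneg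
            · exact Finset.range_subset_range.mpr (Nat.le_succ L)
            · exact fun j _ _ => matL1_nonneg (V j)
        _ ≤ s * (M + 1) := hV
    have h2 : (matNNZ (modifyWeights L p V L) : ℝ) ≤ (pMax L p : ℝ) := by
      have hc : matNNZ (modifyWeights L p V L) ≤ p (L + 1) * p L := by
        unfold matNNZ
        calc _ ≤ (Finset.univ : Finset (Fin (p (L+1)) × Fin (p L))).card :=
              Finset.card_filter_le _ _
          _ = p (L + 1) * p L := by simp
      have hpm : p L ≤ pMax L p := Finset.le_sup (Finset.mem_range.mpr (Nat.lt_succ_self L))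
      have heq : p (L + 1) * p L = p L := by rw [hp, one_mul]
      have : matNNZ (modifyWeights L p V L) ≤ pMax L p :=
        (hc.trans_eq heq).trans hpm
      exact_mod_cast this
    linarith
  · -- boundedness
    intro i hi j k
    have hbound : |modifyWeights L p V i j k| ≤ matL1 (V i) := by
      unfold modifyWeights
      split_ifs
      · calc |(V i).map alphaFn j k| ≤ |V i j k| := abs_alphaFn_le _
          _ ≤ matL1 (V i) := entry_le_matL1 _ _ _
      · exact entry_le_matL1 _ _ _
    exact hbound.trans (hterm i (Finset.mem_range.mpr (Nat.lt_succ_of_le hi)))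
end
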